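/- Let k have characteristic 3, and let A be the 9-dimensional quiver algebra above with symmetrising form s. The projective ideal Z^pr(A) = Tr₁^A(A), where Tr₁^A(u) = Σ_b b·u·b* is the sum over a basis b with s-dual basis b*, is one-dimensional with basis {αβ − βα}. -/

import Mathlib

/-! The 9-dimensional algebra `A` given by the quiver with vertices `i, j`, arrows
`α : i → j`, `β : j → i`, and loops `γ, δ` at `i`, with relations
`δ² = γ³ = αβ`, `δγ = γδ = 0`, `δα = γα = 0`, `βδ = βγ = 0`.
Paths compose left-to-right, so the product `x * y` means "first `x`, then `y`";
in particular `α * β` is a loop at `i` and `β * α` is a loop at `j`.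
We realise `A` as the quotient of the free algebra on the six generators
`e_i, e_j, α, β, γ, δ` by the path-algebra relations together with the quiver relations. -/

open FreeAlgebra

/-- The defining relations of the quiver algebra: generator `0` is the vertex idempotent
`e_i`, `1` is `e_j`, `2` is `α : i → j`, `3` is `β : j → i`, `4` is the loop `γ` at `i`,
and `5` is the loop `δ` at `i`. -/
inductive QuiverRel (k : Type*) [Field k] :
    FreeAlgebra k (Fin 6) → FreeAlgebra k (Fin 6) → Prop
  | idem_i : QuiverRel k (ι k 0 * ι k 0) (ι k 0)
  | idem_j : QuiverRel k (ι k 1 * ι k 1) (ι k 1)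
  | orth_ij : QuiverRel k (ι k 0 * ι k 1) 0
  | orth_ji : QuiverRel k (ι k 1 * ι k 0) 0
  | sum_idem : QuiverRel k (ι k 0 + ι k 1) 1
  | alpha_src : QuiverRel k (ι k 0 * ι k 2) (ι k 2)   -- α starts at i
  | alpha_tgt : QuiverRel k (ι k 2 * ι k 1) (ι k 2)   -- α ends at j
  | beta_src : QuiverRel k (ι k 1 * ι k 3) (ι k 3)    -- β starts at j
  | beta_tgt : QuiverRel k (ι k 3 * ι k 0) (ι k 3)    -- β ends at i
  | gamma_src : QuiverRel k (ι k 0 * ι k 4) (ι k 4)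
  | gamma_tgt : QuiverRel k (ι k 4 * ι k 0) (ι k 4)
  | delta_src : QuiverRel k (ι k 0 * ι k 5) (ι k 5)
  | delta_tgt : QuiverRel k (ι k 5 * ι k 0) (ι k 5)
  | delta_sq : QuiverRel k (ι k 5 * ι k 5) (ι k 2 * ι k 3)        -- δ² = αβ
  | gamma_cube : QuiverRel k (ι k 4 * (ι k 4 * ι k 4)) (ι k 2 * ι k 3)  -- γ³ = αβ
  | delta_gamma : QuiverRel k (ι k 5 * ι k 4) 0
  | gamma_delta : QuiverRel k (ι k 4 * ι k 5) 0
  | delta_alpha : QuiverRel k (ι k 5 * ι k 2) 0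
  | gamma_alpha : QuiverRel k (ι k 4 * ι k 2) 0
  | beta_delta : QuiverRel k (ι k 3 * ι k 5) 0
  | beta_gamma : QuiverRel k (ι k 3 * ι k 4) 0

variable (k : Type*) [Field k]

/-- The 9-dimensional quiver algebra `A`. -/
abbrev QuiverAlg := RingQuot (QuiverRel k)

/-- The vertex idempotent `i`. -/
noncomputable def qi : QuiverAlg k := RingQuot.mkAlgHom k (QuiverRel k) (ι k 0)
/-- The vertex idempotent `j`. -/
noncomputable def qj : QuiverAlg k := RingQuot.mkAlgHom k (QuiverRel k) (ι k 1)
/-- The arrow `α : i → j`. -/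
noncomputable def qα : QuiverAlg k := RingQuot.mkAlgHom k (QuiverRel k) (ι k 2)
/-- The arrow `β : j → i`. -/
noncomputable def qβ : QuiverAlg k := RingQuot.mkAlgHom k (QuiverRel k) (ι k 3)
/-- The loop `γ` at `i`. -/
noncomputable def qγ : QuiverAlg k := RingQuot.mkAlgHom k (QuiverRel k) (ι k 4)
/-- The loop `δ` at `i`. -/
noncomputable def qδ : QuiverAlg k := RingQuot.mkAlgHom k (QuiverRel k) (ι k 5)

/-- The standard basis vector `{i, j, α, β, βα, γ, γ², δ, δ²}` of `A`. -/
noncomputable def qbasisVec : Fin 9 → QuiverAlg k :=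
  ![qi k, qj k, qα k, qβ k, qβ k * qα k, qγ k, qγ k ^ 2, qδ k, qδ k ^ 2]

/-- The dual basis vector `{αβ, βα, β, α, j, γ², γ, δ, i}` (the `s`-duals of the
standard basis elements `{i, j, α, β, βα, γ, γ², δ, δ²}`, in order). -/
noncomputable def qdualVec : Fin 9 → QuiverAlg k :=
  ![qα k * qβ k, qβ k * qα k, qβ k, qα k, qj k, qγ k ^ 2, qγ k, qδ k, qi k]

/-- The relative trace map `Tr₁^A(u) = Σ_b b·u·b*`, summed over the standard basis `b`
with `s`-dual basis `b*`. -/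
noncomputable def qtrace (u : QuiverAlg k) : QuiverAlg k :=
  ∑ m : Fin 9, qbasisVec k m * u * qdualVec k m

/-! ### Auxiliary lemmas -/

section Aux

-- Base relations in the quotient algebra.
lemma m_ii : qi k * qi k = qi k := by
  rw [qi, ← map_mul]; exact RingQuot.mkAlgHom_rel k QuiverRel.idem_i

lemma m_jj : qj k * qj k = qj k := by
  rw [qj, ← map_mul]; exact RingQuot.mkAlgHom_rel k QuiverRel.idem_j

@[simp] lemma m_ij : qi k * qj k = 0 := by
  rw [qi, qj, ← map_mul, RingQuot.mkAlgHom_rel k QuiverRel.orth_ij, map_zero]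

@[simp] lemma m_ji : qj k * qi k = 0 := by
  rw [qi, qj, ← map_mul, RingQuot.mkAlgHom_rel k QuiverRel.orth_ji, map_zero]

lemma h_sum : qi k + qj k = 1 := by
  rw [qi, qj, ← map_add, RingQuot.mkAlgHom_rel k QuiverRel.sum_idem, map_one]

@[simp] lemma m_ia : qi k * qα k = qα k := by
  rw [qi, qα, ← map_mul]; exact RingQuot.mkAlgHom_rel k QuiverRel.alpha_src

@[simp] lemma m_aj : qα k * qj k = qα k := by
  rw [qj, qα, ← map_mul]; exact RingQuot.mkAlgHom_rel k QuiverRel.alpha_tgt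

@[simp] lemma m_jb : qj k * qβ k = qβ k := by
  rw [qj, qβ, ← map_mul]; exact RingQuot.mkAlgHom_rel k QuiverRel.beta_src

@[simp] lemma m_bi : qβ k * qi k = qβ k := by
  rw [qi, qβ, ← map_mul]; exact RingQuot.mkAlgHom_rel k QuiverRel.beta_tgt

@[simp] lemma m_ig : qi k * qγ k = qγ k := by
  rw [qi, qγ, ← map_mul]; exact RingQuot.mkAlgHom_rel k QuiverRel.gamma_src

@[simp] lemma m_gi : qγ k * qi k = qγ k := by
  rw [qi, qγ, ← map_mul]; exact RingQuot.mkAlgHom_rel k QuiverRel.gamma_tgt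

@[simp] lemma m_id : qi k * qδ k = qδ k := by
  rw [qi, qδ, ← map_mul]; exact RingQuot.mkAlgHom_rel k QuiverRel.delta_src

@[simp] lemma m_di : qδ k * qi k = qδ k := by
  rw [qi, qδ, ← map_mul]; exact RingQuot.mkAlgHom_rel k QuiverRel.delta_tgt

@[simp] lemma m_dd : qδ k * qδ k = qα k * qβ k := by
  rw [qα, qβ, qδ, ← map_mul, ← map_mul]
  exact RingQuot.mkAlgHom_rel k QuiverRel.delta_sq

lemma m_ggg : qγ k * (qγ k * qγ k) = qα k * qβ k := by
  rw [qα, qβ, qγ, ← map_mul, ← map_mul, ← map_mul]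
  exact RingQuot.mkAlgHom_rel k QuiverRel.gamma_cube

@[simp] lemma m_dg : qδ k * qγ k = 0 := by
  rw [qγ, qδ, ← map_mul, RingQuot.mkAlgHom_rel k QuiverRel.delta_gamma, map_zero]

@[simp] lemma m_gd : qγ k * qδ k = 0 := by
  rw [qγ, qδ, ← map_mul, RingQuot.mkAlgHom_rel k QuiverRel.gamma_delta, map_zero]

@[simp] lemma m_da : qδ k * qα k = 0 := by
  rw [qα, qδ, ← map_mul, RingQuot.mkAlgHom_rel k QuiverRel.delta_alpha, map_zero]

@[simp] lemma m_ga : qγ k * qα k = 0 := by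
  rw [qα, qγ, ← map_mul, RingQuot.mkAlgHom_rel k QuiverRel.gamma_alpha, map_zero]

@[simp] lemma m_bd : qβ k * qδ k = 0 := by
  rw [qβ, qδ, ← map_mul, RingQuot.mkAlgHom_rel k QuiverRel.beta_delta, map_zero]

@[simp] lemma m_bg : qβ k * qγ k = 0 := by
  rw [qβ, qγ, ← map_mul, RingQuot.mkAlgHom_rel k QuiverRel.beta_gamma, map_zero]

-- Derived pair products.
@[simp] lemma m_ja : qj k * qα k = 0 := by
  rw [← m_ia k, ← mul_assoc, m_ji, zero_mul]

@[simp] lemma m_ib : qi k * qβ k = 0 := by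
  rw [← m_jb k, ← mul_assoc, m_ij, zero_mul]

@[simp] lemma m_jg : qj k * qγ k = 0 := by
  rw [← m_ig k, ← mul_assoc, m_ji, zero_mul]

@[simp] lemma m_jd : qj k * qδ k = 0 := by
  rw [← m_id k, ← mul_assoc, m_ji, zero_mul]

@[simp] lemma m_ai : qα k * qi k = 0 := by
  nth_rewrite 1 [← m_aj k]; rw [mul_assoc, m_ji, mul_zero]

@[simp] lemma m_bj : qβ k * qj k = 0 := by
  nth_rewrite 1 [← m_bi k]; rw [mul_assoc, m_ij, mul_zero]

@[simp] lemma m_gj : qγ k * qj k = 0 := by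
  nth_rewrite 1 [← m_gi k]; rw [mul_assoc, m_ij, mul_zero]

@[simp] lemma m_dj : qδ k * qj k = 0 := by
  nth_rewrite 1 [← m_di k]; rw [mul_assoc, m_ij, mul_zero]

@[simp] lemma m_aa : qα k * qα k = 0 := by
  nth_rewrite 2 [← m_ia k]; rw [← mul_assoc, m_ai, zero_mul]

@[simp] lemma m_ag : qα k * qγ k = 0 := by
  nth_rewrite 1 [← m_ig k]; rw [← mul_assoc, m_ai, zero_mul]

@[simp] lemma m_ad : qα k * qδ k = 0 := by
  nth_rewrite 1 [← m_id k]; rw [← mul_assoc, m_ai, zero_mul]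

@[simp] lemma m_bb : qβ k * qβ k = 0 := by
  nth_rewrite 2 [← m_jb k]; rw [← mul_assoc, m_bj, zero_mul]

@[simp] lemma m_gb : qγ k * qβ k = 0 := by
  rw [← m_jb k, ← mul_assoc, m_gj, zero_mul]

@[simp] lemma m_db : qδ k * qβ k = 0 := by
  rw [← m_jb k, ← mul_assoc, m_dj, zero_mul]

-- Composite (left-associated) products with `αβ`, `βα`, `γγ` prefixes.
@[simp] lemma c_ABi : qα k * qβ k * qi k = qα k * qβ k := by rw [mul_assoc, m_bi]

@[simp] lemma c_ABj : qα k * qβ k * qj k = 0 := by rw [mul_assoc, m_bj, mul_zero]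

@[simp] lemma c_ABa : qα k * qβ k * qα k = 0 := by
  rw [← m_dd k, mul_assoc, m_da, mul_zero]

@[simp] lemma c_ABb : qα k * qβ k * qβ k = 0 := by rw [mul_assoc, m_bb, mul_zero]

@[simp] lemma c_ABg : qα k * qβ k * qγ k = 0 := by
  rw [← m_dd k, mul_assoc, m_dg, mul_zero]

@[simp] lemma c_ABd : qα k * qβ k * qδ k = 0 := by
  rw [← m_dd k, mul_assoc, m_dd k, ← mul_assoc, m_da, zero_mul]

@[simp] lemma c_BAi : qβ k * qα k * qi k = 0 := by rw [mul_assoc, m_ai, mul_zero]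

@[simp] lemma c_BAj : qβ k * qα k * qj k = qβ k * qα k := by rw [mul_assoc, m_aj]

@[simp] lemma c_BAa : qβ k * qα k * qα k = 0 := by rw [mul_assoc, m_aa, mul_zero]

@[simp] lemma c_BAb : qβ k * qα k * qβ k = 0 := by
  rw [mul_assoc, ← m_dd k, ← mul_assoc, m_bd, zero_mul]

@[simp] lemma c_BAg : qβ k * qα k * qγ k = 0 := by rw [mul_assoc, m_ag, mul_zero]

@[simp] lemma c_BAd : qβ k * qα k * qδ k = 0 := by rw [mul_assoc, m_ad, mul_zero]

@[simp] lemma c_GGi : qγ k * qγ k * qi k = qγ k * qγ k := by rw [mul_assoc, m_gi]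

@[simp] lemma c_GGj : qγ k * qγ k * qj k = 0 := by rw [mul_assoc, m_gj, mul_zero]

@[simp] lemma c_GGa : qγ k * qγ k * qα k = 0 := by rw [mul_assoc, m_ga, mul_zero]

@[simp] lemma c_GGb : qγ k * qγ k * qβ k = 0 := by rw [mul_assoc, m_gb, mul_zero]

@[simp] lemma c_GGg : qγ k * qγ k * qγ k = qα k * qβ k := by
  rw [mul_assoc]; exact m_ggg k

@[simp] lemma c_GGd : qγ k * qγ k * qδ k = 0 := by rw [mul_assoc, m_gd, mul_zero]

/-- The nine standard basis elements, as a set (in normal form). -/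
def S9 : Set (QuiverAlg k) :=
  {qi k, qj k, qα k, qβ k, qβ k * qα k, qγ k, qγ k * qγ k, qδ k, qα k * qβ k}

lemma S9_mul {x y : QuiverAlg k} (hx : x ∈ S9 k) (hy : y ∈ S9 k) :
    x * y ∈ Submodule.span k (S9 k) := by
  simp only [S9, Set.mem_insert_iff, Set.mem_singleton_iff] at hx hy
  rcases hx with rfl | rfl | rfl | rfl | rfl | rfl | rfl | rfl | rfl <;>
    rcases hy with rfl | rfl | rfl | rfl | rfl | rfl | rfl | rfl | rfl <;>
      (try simp only [← mul_assoc, m_ii, m_jj, m_ij, m_ji, m_ia, m_aj, m_jb, m_bi, m_ig, m_gi,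
        m_id, m_di, m_dd, m_dg, m_gd, m_da, m_ga, m_bd, m_bg, m_ja, m_ib, m_jg, m_jd, m_ai,
        m_bj, m_gj, m_dj, m_aa, m_ag, m_ad, m_bb, m_gb, m_db, c_ABi, c_ABj, c_ABa, c_ABb,
        c_ABg, c_ABd, c_BAi, c_BAj, c_BAa, c_BAb, c_BAg, c_BAd, c_GGi, c_GGj, c_GGa, c_GGb,
        c_GGg, c_GGd, zero_mul, mul_zero]) <;>
      first
        | exact Submodule.zero_mem _
        | exact Submodule.subset_span (by simp [S9])

lemma span_S9_top : Submodule.span k (S9 k) = ⊤ := by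
  rw [eq_top_iff]
  rintro x -
  obtain ⟨y, rfl⟩ := RingQuot.mkAlgHom_surjective k (QuiverRel k) x
  have hmul : Submodule.span k (S9 k) * Submodule.span k (S9 k) ≤ Submodule.span k (S9 k) := by
    rw [Submodule.span_mul_span, Submodule.span_le]
    rintro z hz
    obtain ⟨a, ha, b, hb, rfl⟩ := hz
    exact S9_mul k ha hb
  induction y using FreeAlgebra.induction with
  | grade0 r =>
      rw [AlgHom.commutes, Algebra.algebraMap_eq_smul_one, ← h_sum k]
      exact Submodule.smul_mem _ _ (add_mem
        (Submodule.subset_span (by simp [S9])) (Submodule.subset_span (by simp [S9])))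
  | grade1 m =>
      fin_cases m <;>
        exact Submodule.subset_span (by simp [S9, qi, qj, qα, qβ, qγ, qδ])
  | mul a b ha hb =>
      rw [map_mul]; exact hmul (Submodule.mul_mem_mul ha hb)
  | add a b ha hb =>
      rw [map_add]; exact add_mem ha hb

lemma qtrace_zero : qtrace k 0 = 0 := by simp [qtrace]

lemma qtrace_add (u v : QuiverAlg k) : qtrace k (u + v) = qtrace k u + qtrace k v := by
  simp [qtrace, mul_add, add_mul, Finset.sum_add_distrib]

lemma qtrace_smul (c : k) (u : QuiverAlg k) : qtrace k (c • u) = c • qtrace k u := by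
  simp [qtrace, Finset.smul_sum, mul_smul_comm, smul_mul_assoc]

lemma qtrace_eq (u : QuiverAlg k) :
    qtrace k u =
      qi k * u * (qα k * qβ k) + qj k * u * (qβ k * qα k) + qα k * u * qβ k +
        qβ k * u * qα k + qβ k * qα k * u * qj k + qγ k * u * (qγ k * qγ k) +
        qγ k * qγ k * u * qγ k + qδ k * u * qδ k + qδ k * qδ k * u * qi k := by
  simp only [qtrace, Fin.sum_univ_succ, Fin.sum_univ_zero, qbasisVec, qdualVec,
    Matrix.cons_val_zero, Matrix.cons_val_succ, pow_two, add_zero]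
  abel

end Aux


lemma mem_span_pos (x : QuiverAlg k) (h : x - (qα k * qβ k - qβ k * qα k) = 0) :
    x ∈ Submodule.span k {qα k * qβ k - qβ k * qα k} :=
  (sub_eq_zero.mp h) ▸ Submodule.mem_span_singleton_self _

lemma mem_span_neg (x : QuiverAlg k) (h : x + (qα k * qβ k - qβ k * qα k) = 0) :
    x ∈ Submodule.span k {qα k * qβ k - qβ k * qα k} :=
  (eq_neg_of_add_eq_zero_left h) ▸ neg_mem (Submodule.mem_span_singleton_self _)

lemma z3 [CharP k 3] (n : ℤ) (x : QuiverAlg k) : (n * 3) • x = 0 := by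
  have h30 : ((3 : ℤ) : k) = 0 := by exact_mod_cast CharP.cast_eq_zero k 3
  rw [mul_smul, ← Int.cast_smul_eq_zsmul k (3 : ℤ) x, h30, zero_smul]
  exact smul_zero n

section Rep

/-- Matrices for a 3-dimensional representation distinguishing `αβ` from `βα`. -/
noncomputable def repMats : Fin 6 → Matrix (Fin 3) (Fin 3) k :=
  ![!![1,0,0;0,0,0;0,0,0], !![0,0,0;0,1,0;0,0,1], !![0,0,1;0,0,0;0,0,0],
    !![0,0,0;1,0,0;0,0,0], 0, 0]

@[simp] lemma repMats_0 : repMats k 0 = !![1,0,0;0,0,0;0,0,0] := rfl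
@[simp] lemma repMats_1 : repMats k 1 = !![0,0,0;0,1,0;0,0,1] := rfl
@[simp] lemma repMats_2 : repMats k 2 = !![0,0,1;0,0,0;0,0,0] := rfl
@[simp] lemma repMats_3 : repMats k 3 = !![0,0,0;1,0,0;0,0,0] := rfl
@[simp] lemma repMats_4 : repMats k 4 = 0 := rfl
@[simp] lemma repMats_5 : repMats k 5 = 0 := rfl

/-- The representation on the free algebra. -/
noncomputable def repF : FreeAlgebra k (Fin 6) →ₐ[k] Matrix (Fin 3) (Fin 3) k :=
  FreeAlgebra.lift k (repMats k)

lemma repF_rel : ∀ ⦃x y⦄, QuiverRel k x y → repF k x = repF k y := by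
  intro x y h
  induction h <;>
    simp only [repF, map_mul, map_add, map_zero, map_one, FreeAlgebra.lift_ι_apply,
      repMats_0, repMats_1, repMats_2, repMats_3, repMats_4, repMats_5,
      zero_mul, mul_zero] <;>
    (try ext i j) <;>
    (try fin_cases i <;> fin_cases j <;>
      norm_num [Matrix.mul_apply, Matrix.one_apply, Fin.sum_univ_succ, Fin.ext_iff])

/-- The representation on the quiver algebra. -/
noncomputable def rep : QuiverAlg k →ₐ[k] Matrix (Fin 3) (Fin 3) k :=
  RingQuot.liftAlgHom k ⟨repF k, repF_rel k⟩

lemma rep_a : rep k (qα k) = !![0,0,1;0,0,0;0,0,0] := by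
  rw [qα, rep, RingQuot.liftAlgHom_mkAlgHom_apply, repF, FreeAlgebra.lift_ι_apply, repMats_2]

lemma rep_b : rep k (qβ k) = !![0,0,0;1,0,0;0,0,0] := by
  rw [qβ, rep, RingQuot.liftAlgHom_mkAlgHom_apply, repF, FreeAlgebra.lift_ι_apply, repMats_3]

lemma qab_sub_ne : qα k * qβ k - qβ k * qα k ≠ 0 := by
  intro h
  have h2 := congrArg (rep k) h
  rw [map_sub, map_mul, map_mul, map_zero, rep_a, rep_b] at h2
  have h3 : ((!![0,0,1;0,0,0;0,0,0] * !![0,0,0;1,0,0;0,0,0] -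
      !![0,0,0;1,0,0;0,0,0] * !![0,0,1;0,0,0;0,0,0] : Matrix (Fin 3) (Fin 3) k)) 1 2 = 0 := by
    rw [h2]; rfl
  norm_num [Matrix.mul_apply, Matrix.sub_apply, Fin.sum_univ_succ] at h3
  exact one_ne_zero (h3 : (1 : k) = 0)

end Rep


/-- In characteristic `3`, the projective ideal `Z^pr(A) = Tr₁^A(A)` is one-dimensional
with basis `{αβ − βα}`. -/
theorem stmt_10 [CharP k 3] :
    Submodule.span k {x : QuiverAlg k | ∃ u : QuiverAlg k, x = qtrace k u} =
      Submodule.span k {qα k * qβ k - qβ k * qα k} ∧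
    qα k * qβ k - qβ k * qα k ≠ 0 := by
  have h3 : (3 : k) = 0 := by exact_mod_cast CharP.cast_eq_zero k 3
  refine ⟨?_, qab_sub_ne k⟩
  apply le_antisymm
  · rw [Submodule.span_le]
    rintro x ⟨u, rfl⟩
    have hu : u ∈ Submodule.span k (S9 k) := by rw [span_S9_top]; trivial
    induction hu using Submodule.span_induction with
    | mem z hz =>
        simp only [S9, Set.mem_insert_iff, Set.mem_singleton_iff] at hz
        rcases hz with rfl | rfl | rfl | rfl | rfl | rfl | rfl | rfl | rfl <;>
          rw [qtrace_eq] <;>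
          simp only [← mul_assoc, m_ii, m_jj, m_ij, m_ji, m_ia, m_aj, m_jb, m_bi, m_ig, m_gi,
            m_id, m_di, m_dd, m_dg, m_gd, m_da, m_ga, m_bd, m_bg, m_ja, m_ib, m_jg, m_jd, m_ai,
            m_bj, m_gj, m_dj, m_aa, m_ag, m_ad, m_bb, m_gb, m_db, c_ABi, c_ABj, c_ABa, c_ABb,
            c_ABg, c_ABd, c_BAi, c_BAj, c_BAa, c_BAb, c_BAg, c_BAd, c_GGi, c_GGj, c_GGa, c_GGb,
            c_GGg, c_GGd, zero_mul, mul_zero, add_zero, zero_add] <;>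
          first
            | exact Submodule.zero_mem _
            | (apply mem_span_pos k; abel_nf;
                first
                  | (rw [show ((3:ℤ)) = 1 * 3 by norm_num]; exact z3 k 1 _)
                  | (rw [show ((-3:ℤ)) = (-1) * 3 by norm_num]; exact z3 k (-1) _)
                  | (rw [show ((6:ℤ)) = 2 * 3 by norm_num]; exact z3 k 2 _)
                  | (rw [show ((-6:ℤ)) = (-2) * 3 by norm_num]; exact z3 k (-2) _))
            | (apply mem_span_neg k; abel_nf;
                first
                  | (rw [show ((3:ℤ)) = 1 * 3 by norm_num]; exact z3 k 1 _)
                  | (rw [show ((-3:ℤ)) = (-1) * 3 by norm_num]; exact z3 k (-1) _)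
                  | (rw [show ((6:ℤ)) = 2 * 3 by norm_num]; exact z3 k 2 _)
                  | (rw [show ((-6:ℤ)) = (-2) * 3 by norm_num]; exact z3 k (-2) _))
    | zero => rw [qtrace_zero]; exact Submodule.zero_mem _
    | add x y hx hy ihx ihy => rw [qtrace_add]; exact add_mem ihx ihy
    | smul c x hx ihx => rw [qtrace_smul]; exact Submodule.smul_mem _ _ ihx
  · rw [Submodule.span_le, Set.singleton_subset_iff]
    have hj : qα k * qβ k - qβ k * qα k = qtrace k (qj k) := by
      rw [qtrace_eq]
      simp only [← mul_assoc, m_ii, m_jj, m_ij, m_ji, m_ia, m_aj, m_jb, m_bi, m_ig, m_gi,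
        m_id, m_di, m_dd, m_dg, m_gd, m_da, m_ga, m_bd, m_bg, m_ja, m_ib, m_jg, m_jd, m_ai,
        m_bj, m_gj, m_dj, m_aa, m_ag, m_ad, m_bb, m_gb, m_db, c_ABi, c_ABj, c_ABa, c_ABb,
        c_ABg, c_ABd, c_BAi, c_BAj, c_BAa, c_BAb, c_BAg, c_BAd, c_GGi, c_GGj, c_GGa, c_GGb,
        c_GGg, c_GGd, zero_mul, mul_zero, add_zero, zero_add]
      rw [← sub_eq_zero]; abel_nf
      rw [show ((-3:ℤ)) = (-1) * 3 by norm_num]; exact z3 k (-1) _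
    exact Submodule.subset_span ⟨qj k, hj⟩
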